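/- Let h be an orientation-preserving homeomorphism of ℝ supported on an open interval I contained in a fundamental domain of b ∈ Homeo₊(ℝ) (i.e., bⁿ(I) ∩ I = ∅ for n ≠ 0). Then the infinite product h₁ = ∏_{n∈ℤ} bⁿ h b⁻ⁿ is a well-defined homeomorphism of ℝ, supported on ⋃ₙ bⁿ(I), which commutes with b. -/

import Mathlib

/-- The conjugate `b^n h b^{-n}` applied to `x`. -/
noncomputable def Gf (b e : Equiv.Perm ℝ) (n : ℤ) (x : ℝ) : ℝ :=
  (b ^ n) (e ((b ^ n).symm x))

open Classical in
/-- The infinite product: apply the conjugate `b^n e b^{-n}` on `b^n '' I`, identity elsewhere. -/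
noncomputable def Ff (b e : Equiv.Perm ℝ) (I : Set ℝ) (x : ℝ) : ℝ :=
  if hx : ∃ n : ℤ, x ∈ ⇑(b ^ n) '' I then Gf b e hx.choose x else x

theorem infinite_product_commuting (b : Equiv.Perm ℝ) (hb : StrictMono ⇑b)
    (I : Set ℝ) (hI : IsOpen I)
    (hdisj : ∀ n : ℤ, n ≠ 0 → (⇑(b ^ n) '' I) ∩ I = ∅)
    (h : Equiv.Perm ℝ) (hh : StrictMono ⇑h)
    (hsupp : {x : ℝ | h x ≠ x} ⊆ I) :
    ∃ h₁ : Equiv.Perm ℝ, StrictMono ⇑h₁ ∧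
      (∀ (n : ℤ), ∀ x ∈ ⇑(b ^ n) '' I, h₁ x = (b ^ n) (h ((b ^ n).symm x))) ∧
      {x : ℝ | h₁ x ≠ x} ⊆ (⋃ n : ℤ, ⇑(b ^ n) '' I) ∧
      ∀ x : ℝ, h₁ (b x) = b (h₁ x) := by
  classical
  have symm_mono : ∀ (e : Equiv.Perm ℝ), StrictMono ⇑e → StrictMono ⇑e.symm := by
    intro e he x y hxy
    rw [← he.lt_iff_lt, e.apply_symm_apply, e.apply_symm_apply]
    exact hxy
  have hbinv : StrictMono ⇑(b⁻¹) := symm_mono b hb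
  have pow_mono : ∀ n : ℤ, StrictMono ⇑(b ^ n) := by
    intro n
    induction n using Int.induction_on with
    | zero => simpa using strictMono_id
    | succ k ih =>
        rw [zpow_add_one, Equiv.Perm.coe_mul]
        exact ih.comp hb
    | pred k ih =>
        rw [zpow_sub_one, Equiv.Perm.coe_mul]
        exact ih.comp hbinv
  have pow_symm_mono : ∀ n : ℤ, StrictMono ⇑(b ^ n).symm :=
    fun n => symm_mono _ (pow_mono n)
  -- uniqueness of the translate containing a point
  have huniq : ∀ {n m : ℤ} {x : ℝ}, x ∈ ⇑(b ^ n) '' I → x ∈ ⇑(b ^ m) '' I → n = m := by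
    intro n m x hn hm
    by_contra hne
    obtain ⟨i, hi, hix⟩ := hn
    obtain ⟨j, hj, hjx⟩ := hm
    have e1 : (b ^ m) ((b ^ (n - m)) i) = (b ^ n) i := by
      rw [← Equiv.Perm.mul_apply, ← zpow_add, show m + (n - m) = n from by omega]
    have hij : (b ^ (n - m)) i = j := (b ^ m).injective (by rw [e1, hix, hjx])
    have hmem : j ∈ (⇑(b ^ (n - m)) '' I) ∩ I := ⟨⟨i, hi, hij⟩, hj⟩
    rw [hdisj (n - m) (sub_ne_zero.mpr hne)] at hmem
    exact hmem
  -- a perm supported in I maps I into I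
  have memI : ∀ (e : Equiv.Perm ℝ), ({z : ℝ | e z ≠ z} ⊆ I) → ∀ x ∈ I, e x ∈ I := by
    intro e hse x hx
    by_cases hex : e x = x
    · rwa [hex]
    · by_contra hni
      have h1 : e (e x) = e x := by
        by_contra hc
        exact hni (hse hc)
      exact hex (e.injective h1)
  have hsupp2 : {z : ℝ | h.symm z ≠ z} ⊆ I := by
    intro x hx
    apply hsupp
    simp only [Set.mem_setOf_eq] at hx ⊢
    intro he
    apply hx
    conv_lhs => rw [← he]
    exact h.symm_apply_apply x
  -- facts about Gf
  have Gfix : ∀ (e : Equiv.Perm ℝ) (n : ℤ) (x : ℝ), ({z : ℝ | e z ≠ z} ⊆ I) →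
      x ∉ ⇑(b ^ n) '' I → Gf b e n x = x := by
    intro e n x hse hx
    have h1 : (b ^ n).symm x ∉ I := by
      intro hc
      exact hx ⟨(b ^ n).symm x, hc, (b ^ n).apply_symm_apply x⟩
    have h2 : e ((b ^ n).symm x) = (b ^ n).symm x := by
      by_contra hc
      exact h1 (hse hc)
    simp [Gf, h2]
  have Gmem : ∀ (e : Equiv.Perm ℝ) (n : ℤ) (x : ℝ), ({z : ℝ | e z ≠ z} ⊆ I) →
      x ∈ ⇑(b ^ n) '' I → Gf b e n x ∈ ⇑(b ^ n) '' I := by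
    intro e n x hse hx
    obtain ⟨i, hi, hix⟩ := hx
    exact ⟨e i, memI e hse i hi, by rw [Gf, ← hix, Equiv.symm_apply_apply]⟩
  have Gmono : ∀ (e : Equiv.Perm ℝ) (n : ℤ), StrictMono ⇑e → StrictMono (Gf b e n) := by
    intro e n he
    exact (pow_mono n).comp (he.comp (pow_symm_mono n))
  have Gcancel : ∀ (e : Equiv.Perm ℝ) (n : ℤ) (x : ℝ), Gf b e.symm n (Gf b e n x) = x := by
    intro e n x
    simp [Gf]
  -- facts about Ff
  have Fspec : ∀ (e : Equiv.Perm ℝ) (n : ℤ) (x : ℝ), x ∈ ⇑(b ^ n) '' I →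
      Ff b e I x = Gf b e n x := by
    intro e n x hx
    have hex : ∃ m : ℤ, x ∈ ⇑(b ^ m) '' I := ⟨n, hx⟩
    have hch : hex.choose = n := huniq hex.choose_spec hx
    rw [Ff, dif_pos hex, hch]
  have Fout : ∀ (e : Equiv.Perm ℝ) (x : ℝ), (∀ n : ℤ, x ∉ ⇑(b ^ n) '' I) →
      Ff b e I x = x := by
    intro e x hx
    rw [Ff, dif_neg]
    push_neg
    exact hx
  have Finv : ∀ (e : Equiv.Perm ℝ), ({z : ℝ | e z ≠ z} ⊆ I) →
      ∀ x : ℝ, Ff b e.symm I (Ff b e I x) = x := by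
    intro e hse x
    by_cases hex : ∃ n : ℤ, x ∈ ⇑(b ^ n) '' I
    · obtain ⟨n, hn⟩ := hex
      rw [Fspec e n x hn, Fspec e.symm n _ (Gmem e n x hse hn), Gcancel]
    · push_neg at hex
      rw [Fout e x hex, Fout e.symm x hex]
  -- the homeomorphism
  have rightinv : ∀ x : ℝ, Ff b h I (Ff b h.symm I x) = x := by
    intro x
    have := Finv h.symm hsupp2 x
    rwa [Equiv.symm_symm] at this
  refine ⟨⟨Ff b h I, Ff b h.symm I, Finv h hsupp, rightinv⟩, ?_, ?_, ?_, ?_⟩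
  · -- strict monotonicity
    intro x y hxy
    show Ff b h I x < Ff b h I y
    by_cases hex : ∃ n : ℤ, x ∈ ⇑(b ^ n) '' I
    · obtain ⟨n, hxn⟩ := hex
      by_cases hey : ∃ m : ℤ, y ∈ ⇑(b ^ m) '' I
      · obtain ⟨m, hym⟩ := hey
        rw [Fspec h n x hxn, Fspec h m y hym]
        by_cases hnm : n = m
        · subst hnm
          exact Gmono h n hh hxy
        · have hyn : y ∉ ⇑(b ^ n) '' I := fun hc => hnm (huniq hc hym)
          have s1 : Gf b h n x < y := by
            have := Gmono h n hh hxy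
            rwa [Gfix h n y hsupp hyn] at this
          have s2 : Gf b h n x ∉ ⇑(b ^ m) '' I :=
            fun hc => hnm (huniq (Gmem h n x hsupp hxn) hc)
          have s3 := Gmono h m hh s1
          rwa [Gfix h m _ hsupp s2] at s3
      · push_neg at hey
        rw [Fspec h n x hxn, Fout h y hey]
        have := Gmono h n hh hxy
        rwa [Gfix h n y hsupp (hey n)] at this
    · push_neg at hex
      rw [Fout h x hex]
      by_cases hey : ∃ m : ℤ, y ∈ ⇑(b ^ m) '' I
      · obtain ⟨m, hym⟩ := hey
        rw [Fspec h m y hym]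
        have := Gmono h m hh hxy
        rwa [Gfix h m x hsupp (hex m)] at this
      · push_neg at hey
        rw [Fout h y hey]
        exact hxy
  · -- local formula
    intro n x hx
    exact Fspec h n x hx
  · -- support
    intro x hx
    simp only [Set.mem_setOf_eq] at hx
    by_contra hc
    simp only [Set.mem_iUnion] at hc
    push_neg at hc
    exact hx (Fout h x hc)
  · -- commutes with b
    intro x
    show Ff b h I (b x) = b (Ff b h I x)
    have hpow : ∀ n : ℤ, b ^ (n + 1) = b * b ^ n := by
      intro n
      rw [zpow_add_one]
      exact ((Commute.refl b).zpow_left n).eq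
    have app_shift : ∀ (n : ℤ) (z : ℝ), (b ^ (n + 1)) z = b ((b ^ n) z) := by
      intro n z
      rw [hpow n, Equiv.Perm.mul_apply]
    have symm_shift : ∀ (n : ℤ) (z : ℝ), (b ^ (n + 1)).symm (b z) = (b ^ n).symm z := by
      intro n z
      apply (b ^ (n + 1)).injective
      rw [Equiv.apply_symm_apply, app_shift, Equiv.apply_symm_apply]
    by_cases hex : ∃ n : ℤ, x ∈ ⇑(b ^ n) '' I
    · obtain ⟨n, hn⟩ := hex
      have hbx : b x ∈ ⇑(b ^ (n + 1)) '' I := by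
        obtain ⟨i, hi, hix⟩ := hn
        exact ⟨i, hi, by rw [app_shift, hix]⟩
      rw [Fspec h (n + 1) _ hbx, Fspec h n x hn]
      show Gf b h (n + 1) (b x) = b (Gf b h n x)
      rw [Gf, Gf, symm_shift, app_shift]
    · push_neg at hex
      have hbx : ∀ m : ℤ, b x ∉ ⇑(b ^ m) '' I := by
        intro m hm
        obtain ⟨i, hi, hix⟩ := hm
        apply hex (m - 1)
        refine ⟨i, hi, ?_⟩
        have e1 : (b ^ m) i = b ((b ^ (m - 1)) i) := by
          rw [← app_shift, show m - 1 + 1 = m from by omega]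
        apply b.injective
        rw [← e1, hix]
      rw [Fout h _ hbx, Fout h x hex]
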